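/- The completed Eisenstein series satisfies the functional equation E*_s(z) = E*_{1−s}(z) for all z ∈ ℍ and all s where both sides are defined (by meromorphic continuation). -/

import Mathlib

open Real Set

/-- The completed Eisenstein series
`E*_s(z) = (1/2) π^{-s} Γ(s) Σ_{(m,n)≠0} (y/|mz+n|²)^s`, for `Re(s) > 1`. -/
noncomputable def Estar (s : ℂ) (x y : ℝ) : ℂ :=
  (1 / 2) * (Real.pi : ℂ) ^ (-s) * Complex.Gamma s *
    ∑' p : ℤ × ℤ, if p = 0 then 0 else
      ((y : ℂ) / ((((p.1 : ℝ) * x + (p.2 : ℝ)) ^ 2 + (p.1 : ℝ) ^ 2 * y ^ 2 : ℝ) : ℂ)) ^ s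

open Real Set Complex Filter Topology Asymptotics MeasureTheory

noncomputable section EstarAux

namespace EstarAux

variable (x y : ℝ)

/-- The quadratic form of determinant one attached to `z = x + iy`. -/
def Qf (p : ℤ × ℤ) : ℝ := (((p.1 : ℝ) * x + (p.2 : ℝ)) ^ 2 + (p.1 : ℝ) ^ 2 * y ^ 2) / y

lemma Qf_lower (hy : 0 < y) (p : ℤ × ℤ) :
    y / (1 + x ^ 2 + y ^ 2) * ((p.1 : ℝ) ^ 2 + (p.2 : ℝ) ^ 2) ≤ Qf x y p := by
  have hc : (0:ℝ) < 1 + x ^ 2 + y ^ 2 := by positivity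
  rw [Qf, div_mul_eq_mul_div, div_le_div_iff₀ hc hy]
  set m := (p.1 : ℝ); set n := (p.2 : ℝ)
  nlinarith [sq_nonneg ((1 + x ^ 2) * (m * x + n) + m * x * y ^ 2), sq_nonneg (m * y ^ 2),
    sq_nonneg (m * x + n), sq_nonneg m, sq_nonneg n, sq_nonneg y, sq_nonneg x]

lemma Qf_nonneg (hy : 0 < y) (p : ℤ × ℤ) : 0 ≤ Qf x y p := by
  have := Qf_lower x y hy p
  nlinarith [sq_nonneg (p.1 : ℝ), sq_nonneg (p.2 : ℝ), div_pos hy (by positivity : (0:ℝ) < 1 + x ^ 2 + y ^ 2)]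

lemma one_le_sq_add_sq {p : ℤ × ℤ} (hp : p ≠ 0) : (1:ℝ) ≤ (p.1 : ℝ) ^ 2 + (p.2 : ℝ) ^ 2 := by
  have h : p.1 ≠ 0 ∨ p.2 ≠ 0 := by
    by_contra h; push_neg at h; exact hp (Prod.ext h.1 h.2)
  have : (1:ℤ) ≤ p.1 ^ 2 + p.2 ^ 2 := by
    rcases h with h | h
    · nlinarith [sq_nonneg p.2, Int.one_le_abs h, _root_.sq_abs p.1, sq_nonneg (|p.1| - 1)]
    · nlinarith [sq_nonneg p.1, Int.one_le_abs h, _root_.sq_abs p.2, sq_nonneg (|p.2| - 1)]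
  exact_mod_cast this

lemma Qf_pos (hy : 0 < y) {p : ℤ × ℤ} (hp : p ≠ 0) :
    y / (1 + x ^ 2 + y ^ 2) ≤ Qf x y p := by
  have h1 := Qf_lower x y hy p
  have h2 := one_le_sq_add_sq hp
  have hc : (0:ℝ) < y / (1 + x ^ 2 + y ^ 2) := div_pos hy (by positivity)
  nlinarith

/-- 1D summability of Gaussian over the integers. -/
lemma summable_exp_neg_int_sq {a : ℝ} (ha : 0 < a) :
    Summable fun n : ℤ => rexp (-a * (n : ℝ) ^ 2) := by
  have hnat : Summable fun n : ℕ => rexp (-a * (n : ℝ) ^ 2) := by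
    refine Summable.of_nonneg_of_le (fun n => (Real.exp_pos _).le) (fun n => ?_)
      (summable_geometric_of_lt_one (Real.exp_pos (-a)).le
        (Real.exp_lt_one_iff.mpr (neg_neg_iff_pos.mpr ha)))
    rw [← Real.exp_nat_mul]
    apply Real.exp_le_exp.mpr
    have h0 : (0:ℝ) ≤ (n:ℝ) := Nat.cast_nonneg n
    have : (n : ℝ) ≤ (n : ℝ) ^ 2 := by
      rcases Nat.eq_zero_or_pos n with h | h
      · simp [h]
      · have h1 : (1:ℝ) ≤ (n:ℝ) := by exact_mod_cast h
        nlinarith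
    nlinarith
  refine (summable_int_iff_summable_nat_and_neg).mpr ⟨hnat, ?_⟩
  convert hnat using 2 with n
  · rfl
  push_cast; ring_nf

lemma summable_exp_neg_sq_add_sq {a : ℝ} (ha : 0 < a) :
    Summable fun p : ℤ × ℤ => rexp (-a * ((p.1 : ℝ) ^ 2 + (p.2 : ℝ) ^ 2)) := by
  have := (summable_exp_neg_int_sq ha).mul_of_nonneg (summable_exp_neg_int_sq ha)
    (fun n => (Real.exp_pos _).le) (fun n => (Real.exp_pos _).le)
  refine this.congr fun p => ?_
  rw [← Real.exp_add]; ring_nf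

lemma summable_Qf (hy : 0 < y) {t : ℝ} (ht : 0 < t) :
    Summable fun p : ℤ × ℤ => rexp (-π * t * Qf x y p) := by
  have hc : (0:ℝ) < y / (1 + x ^ 2 + y ^ 2) := div_pos hy (by positivity)
  refine Summable.of_nonneg_of_le (fun p => (Real.exp_pos _).le) (fun p => ?_)
    (summable_exp_neg_sq_add_sq (a := π * t * (y / (1 + x ^ 2 + y ^ 2)))
      (by positivity))
  apply Real.exp_le_exp.mpr
  have := Qf_lower x y hy p
  have hπt : (0:ℝ) < π * t := by positivity
  nlinarith


/-- Shifted 1D Poisson summation. -/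
lemma poisson_shift {u : ℝ} (hu : 0 < u) (c : ℝ) :
    ∑' n : ℤ, (rexp (-π * u * ((n : ℝ) + c) ^ 2) : ℂ) =
      1 / (u : ℂ) ^ (1 / 2 : ℂ) *
        ∑' n : ℤ, Complex.exp (2 * π * Complex.I * c * n - π * n ^ 2 / u) := by
  have key := Complex.tsum_exp_neg_quadratic (a := (u : ℂ)) (by simpa using hu)
    (-((u : ℂ) * (c : ℂ)))
  set E : ℂ := Complex.exp (-(π : ℂ) * u * c ^ 2) with hE
  calc ∑' n : ℤ, (rexp (-π * u * ((n : ℝ) + c) ^ 2) : ℂ)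
      = ∑' n : ℤ, E * Complex.exp (-(π:ℂ) * u * (n:ℂ) ^ 2 + 2 * π * (-((u:ℂ) * c)) * n) := by
        refine tsum_congr fun n => ?_
        rw [hE, ← Complex.exp_add, Complex.ofReal_exp]
        push_cast
        congr 1
        ring
    _ = E * ∑' n : ℤ, Complex.exp (-(π:ℂ) * u * (n:ℂ) ^ 2 + 2 * π * (-((u:ℂ) * c)) * n) :=
        tsum_mul_left
    _ = E * (1 / (u : ℂ) ^ (1 / 2 : ℂ) *
          ∑' n : ℤ, Complex.exp (-(π:ℂ) / u * ((n:ℂ) + Complex.I * (-((u:ℂ) * c))) ^ 2)) := by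
        rw [key]
    _ = 1 / (u : ℂ) ^ (1 / 2 : ℂ) *
          ∑' n : ℤ, E * Complex.exp (-(π:ℂ) / u * ((n:ℂ) + Complex.I * (-((u:ℂ) * c))) ^ 2) := by
        rw [tsum_mul_left]; ring
    _ = 1 / (u : ℂ) ^ (1 / 2 : ℂ) *
        ∑' n : ℤ, Complex.exp (2 * π * Complex.I * c * n - π * n ^ 2 / u) := by
        congr 1
        refine tsum_congr fun n => ?_
        rw [hE, ← Complex.exp_add]
        congr 1
        have hu' : (u : ℂ) ≠ 0 := Complex.ofReal_ne_zero.mpr hu.ne'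
        field_simp
        ring_nf
        rw [Complex.I_sq]
        ring

/-- The theta function of the quadratic form. -/
def Θ (t : ℝ) : ℂ := ∑' p : ℤ × ℤ, (rexp (-π * t * Qf x y p) : ℂ)

/-- The partially Fourier-transformed kernel. -/
def Wterm (t : ℝ) (p : ℤ × ℤ) : ℂ :=
  Complex.exp (((-π * t * (p.1 : ℝ) ^ 2 * y - π * (p.2 : ℝ) ^ 2 * y / t : ℝ) : ℂ) +
    ((2 * π * ((p.1 : ℝ) * (p.2 : ℝ) * x) : ℝ) : ℂ) * Complex.I)

lemma norm_Wterm (t : ℝ) (p : ℤ × ℤ) :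
    ‖Wterm x y t p‖ = rexp (-π * t * (p.1 : ℝ) ^ 2 * y - π * (p.2 : ℝ) ^ 2 * y / t) := by
  rw [Wterm, Complex.exp_add, norm_mul, ← Complex.ofReal_exp, Complex.norm_real,
    Real.norm_eq_abs, Real.abs_exp, Complex.norm_exp_ofReal_mul_I, mul_one]

lemma summable_Wterm (hy : 0 < y) {t : ℝ} (ht : 0 < t) :
    Summable (Wterm x y t) := by
  rw [← summable_norm_iff]
  simp_rw [norm_Wterm]
  have := (summable_exp_neg_int_sq (a := π * t * y) (by positivity)).mul_of_nonneg
    (summable_exp_neg_int_sq (a := π * y / t) (by positivity))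
    (fun n => (Real.exp_pos _).le) (fun n => (Real.exp_pos _).le)
  refine this.congr fun p => ?_
  rw [← Real.exp_add]
  congr 1
  ring

def W (t : ℝ) : ℂ := ∑' p : ℤ × ℤ, Wterm x y t p

lemma summable_theta (hy : 0 < y) {t : ℝ} (ht : 0 < t) :
    Summable fun p : ℤ × ℤ => (rexp (-π * t * Qf x y p) : ℂ) := by
  rw [← summable_norm_iff]
  refine (summable_Qf x y hy ht).congr fun p => ?_
  rw [Complex.norm_real, Real.norm_eq_abs, Real.abs_exp]

lemma theta_eq (hy : 0 < y) {t : ℝ} (ht : 0 < t) :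
    Θ x y t = 1 / ((t / y : ℝ) : ℂ) ^ (1 / 2 : ℂ) * W x y t := by
  have hu : 0 < t / y := div_pos ht hy
  have ht' : (t : ℂ) ≠ 0 := Complex.ofReal_ne_zero.mpr ht.ne'
  have hy' : (y : ℂ) ≠ 0 := Complex.ofReal_ne_zero.mpr hy.ne'
  rw [Θ, Summable.tsum_prod' (summable_theta x y hy ht) (fun m => ((summable_theta x y hy ht).prod_factor m))]
  calc (∑' m : ℤ, ∑' n : ℤ, (rexp (-π * t * Qf x y (m, n)) : ℂ))
      = ∑' m : ℤ, ((rexp (-π * t * (m : ℝ) ^ 2 * y) : ℂ) *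
          ∑' n : ℤ, (rexp (-π * (t / y) * ((n : ℝ) + (m : ℝ) * x) ^ 2) : ℂ)) := by
        refine tsum_congr fun m => ?_
        rw [← tsum_mul_left]
        refine tsum_congr fun n => ?_
        rw [← Complex.ofReal_mul, ← Real.exp_add]
        congr 2
        rw [Qf]
        field_simp
        ring
    _ = ∑' m : ℤ, ((rexp (-π * t * (m : ℝ) ^ 2 * y) : ℂ) *
          (1 / ((t / y : ℝ) : ℂ) ^ (1 / 2 : ℂ) *
            ∑' n : ℤ, Complex.exp (2 * π * Complex.I * (((m : ℝ) * x : ℝ) : ℂ) * n -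
              π * n ^ 2 / (((t / y : ℝ)) : ℂ)))) := by
        refine tsum_congr fun m => ?_
        rw [poisson_shift hu ((m : ℝ) * x)]
    _ = 1 / ((t / y : ℝ) : ℂ) ^ (1 / 2 : ℂ) * ∑' m : ℤ, ∑' n : ℤ, Wterm x y t (m, n) := by
        rw [← tsum_mul_left]
        refine tsum_congr fun m => ?_
        rw [mul_left_comm]
        congr 1
        rw [← tsum_mul_left]
        refine tsum_congr fun n => ?_
        rw [Wterm, Complex.ofReal_exp, ← Complex.exp_add]
        congr 1
        push_cast
        field_simp
        ring
    _ = 1 / ((t / y : ℝ) : ℂ) ^ (1 / 2 : ℂ) * W x y t := by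
        rw [W, Summable.tsum_prod' (summable_Wterm x y hy ht)
          (fun m => ((summable_Wterm x y hy ht).prod_factor m))]

lemma W_inv (hy : 0 < y) {t : ℝ} (ht : 0 < t) : W x y (1 / t) = W x y t := by
  rw [W, W, ← (Equiv.prodComm ℤ ℤ).tsum_eq (Wterm x y t)]
  refine tsum_congr fun p => ?_
  simp only [Equiv.prodComm_apply, Prod.fst_swap, Prod.snd_swap]
  rw [Wterm, Wterm]
  congr 2
  · simp only [Prod.fst_swap, Prod.snd_swap]
    push_cast
    field_simp
    ring
  · simp only [Prod.fst_swap, Prod.snd_swap]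
    push_cast
    ring

lemma theta_feq (hy : 0 < y) {t : ℝ} (ht : 0 < t) : Θ x y (1 / t) = (t : ℂ) * Θ x y t := by
  rw [theta_eq x y hy (by positivity : (0:ℝ) < 1 / t), theta_eq x y hy ht, W_inv x y hy ht]
  rw [← mul_assoc]
  congr 1
  have h1 : ((1 / t / y : ℝ) : ℂ) ^ (1 / 2 : ℂ) = (((1 / t / y) ^ (1 / 2 : ℝ) : ℝ) : ℂ) := by
    rw [Complex.ofReal_cpow (by positivity) (1/2 : ℝ)]
    norm_num
  have h2 : ((t / y : ℝ) : ℂ) ^ (1 / 2 : ℂ) = (((t / y) ^ (1 / 2 : ℝ) : ℝ) : ℂ) := by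
    rw [Complex.ofReal_cpow (by positivity) (1/2 : ℝ)]
    norm_num
  rw [h1, h2]
  rw [show (t : ℂ) * (1 / (((t / y) ^ (1 / 2 : ℝ) : ℝ) : ℂ)) =
    ((t * (1 / (t / y) ^ (1 / 2 : ℝ)) : ℝ) : ℂ) by push_cast; ring]
  rw [show (1 / (((1 / t / y) ^ (1 / 2 : ℝ) : ℝ) : ℂ)) = ((1 / (1 / t / y) ^ (1 / 2 : ℝ) : ℝ) : ℂ) by
    push_cast; ring]
  congr 1
  rw [← Real.sqrt_eq_rpow, ← Real.sqrt_eq_rpow]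
  have hst : Real.sqrt t ≠ 0 := (Real.sqrt_pos.mpr ht).ne'
  have hsy : Real.sqrt y ≠ 0 := (Real.sqrt_pos.mpr hy).ne'
  have h3 : Real.sqrt (1 / t / y) = 1 / (Real.sqrt t * Real.sqrt y) := by
    rw [show (1 / t / y) = (t * y)⁻¹ by field_simp, Real.sqrt_inv, Real.sqrt_mul ht.le]
    rw [one_div]
  have h4 : Real.sqrt (t / y) = Real.sqrt t / Real.sqrt y := Real.sqrt_div ht.le y
  rw [h3, h4]
  have hsq : Real.sqrt t * Real.sqrt t = t := Real.mul_self_sqrt ht.le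
  field_simp
  linear_combination hsq


lemma continuousOn_theta (hy : 0 < y) : ContinuousOn (Θ x y) (Ioi 0) := by
  intro t₀ ht₀
  rw [mem_Ioi] at ht₀
  have key : ContinuousOn (fun t : ℝ => ∑' p : ℤ × ℤ, (rexp (-π * t * Qf x y p) : ℂ))
      (Ioi (t₀ / 2)) := by
    refine continuousOn_tsum (fun p => ?_) (summable_Qf x y hy (by positivity : (0:ℝ) < t₀/2))
      (fun p t ht => ?_)
    · exact (Complex.continuous_ofReal.comp (Real.continuous_exp.comp (by fun_prop))).continuousOn
    · rw [Complex.norm_real, Real.norm_eq_abs, Real.abs_exp]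
      apply Real.exp_le_exp.mpr
      have h1 := Qf_nonneg x y hy p
      have h2 : t₀ / 2 ≤ t := (mem_Ioi.mp ht).le
      nlinarith [mul_le_mul_of_nonneg_right (mul_le_mul_of_nonneg_left h2 Real.pi_pos.le) h1]
  exact ((key.continuousAt (Ioi_mem_nhds (by linarith))).continuousWithinAt)

lemma Qf_zero : Qf x y 0 = 0 := by simp [Qf]

lemma theta_sub_one (hy : 0 < y) {t : ℝ} (ht : 0 < t) :
    Θ x y t - 1 = ∑' p : ℤ × ℤ, (if p = 0 then 0 else (rexp (-π * t * Qf x y p) : ℂ)) := by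
  have h := Summable.tsum_eq_add_tsum_ite (summable_theta x y hy ht) 0
  rw [Θ, h, Qf_zero, mul_zero, Real.exp_zero, Complex.ofReal_one, add_sub_cancel_left]

lemma summable_masked (hy : 0 < y) {t : ℝ} (ht : 0 < t) :
    Summable fun p : ℤ × ℤ => (if p = 0 then 0 else rexp (-π * t * Qf x y p)) := by
  refine (summable_Qf x y hy ht).of_nonneg_of_le (fun p => ?_) (fun p => ?_)
  · split <;> [rfl; exact (Real.exp_pos _).le]
  · split <;> [exact (Real.exp_pos _).le; exact le_rfl]

lemma theta_isBigO (hy : 0 < y) :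
    (fun t => Θ x y t - 1) =O[atTop]
      fun t => rexp (-(π * (y / (1 + x ^ 2 + y ^ 2))) * t) := by
  set c : ℝ := y / (1 + x ^ 2 + y ^ 2) with hc
  have hc0 : 0 < c := div_pos hy (by positivity)
  set C : ℝ := rexp (π * c) * ∑' p : ℤ × ℤ, rexp (-π * Qf x y p) with hC
  rw [Asymptotics.isBigO_iff]
  refine ⟨C, ?_⟩
  filter_upwards [eventually_ge_atTop 1] with t ht
  have ht0 : (0:ℝ) < t := lt_of_lt_of_le one_pos ht
  rw [theta_sub_one x y hy ht0]
  have hns : Summable fun p : ℤ × ℤ =>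
      ‖(if p = 0 then 0 else (rexp (-π * t * Qf x y p) : ℂ))‖ := by
    refine (summable_masked x y hy ht0).congr fun p => ?_
    split
    · simp
    · rw [Complex.norm_real, Real.norm_eq_abs, Real.abs_exp]
  calc ‖∑' p : ℤ × ℤ, (if p = 0 then 0 else (rexp (-π * t * Qf x y p) : ℂ))‖
      ≤ ∑' p : ℤ × ℤ, ‖(if p = 0 then 0 else (rexp (-π * t * Qf x y p) : ℂ))‖ :=
        norm_tsum_le_tsum_norm hns
    _ ≤ ∑' p : ℤ × ℤ, (rexp (π * c) * rexp (-(π * c) * t)) * rexp (-π * Qf x y p) := by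
        refine Summable.tsum_le_tsum (fun p => ?_) hns
          (((summable_Qf x y hy one_pos).congr (fun p => by rw [mul_one])).mul_left _)
        by_cases hp : p = 0
        · rw [if_pos hp, norm_zero]
          positivity
        · rw [if_neg hp, Complex.norm_real, Real.norm_eq_abs, Real.abs_exp, ← Real.exp_add,
            ← Real.exp_add]
          apply Real.exp_le_exp.mpr
          have hQ : c ≤ Qf x y p := Qf_pos x y hy hp
          nlinarith [Real.pi_pos, mul_le_mul_of_nonneg_right hQ (by linarith : (0:ℝ) ≤ t - 1),
            Real.pi_pos.le]
    _ ≤ C * ‖rexp (-(π * c) * t)‖ := by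
        rw [tsum_mul_left, Real.norm_eq_abs, Real.abs_exp]
        apply le_of_eq
        rw [hC]
        ring

/-- The FE pair for the Eisenstein theta function. -/
def thetaPair (hy : 0 < y) : WeakFEPair ℂ where
  f := Θ x y
  g := Θ x y
  k := 1
  ε := 1
  f₀ := 1
  g₀ := 1
  hf_int := (continuousOn_theta x y hy).locallyIntegrableOn measurableSet_Ioi
  hg_int := (continuousOn_theta x y hy).locallyIntegrableOn measurableSet_Ioi
  hk := one_pos
  hε := one_ne_zero
  h_feq := fun t ht => by
    have := theta_feq x y hy (mem_Ioi.mp ht)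
    rw [this, smul_eq_mul, Real.rpow_one, one_mul]
  hf_top := fun r => by
    have hc0 : 0 < π * (y / (1 + x ^ 2 + y ^ 2)) :=
      mul_pos Real.pi_pos (div_pos hy (by positivity))
    exact (theta_isBigO x y hy).trans (isLittleO_exp_neg_mul_rpow_atTop hc0 r).isBigO
  hg_top := fun r => by
    have hc0 : 0 < π * (y / (1 + x ^ 2 + y ^ 2)) :=
      mul_pos Real.pi_pos (div_pos hy (by positivity))
    exact (theta_isBigO x y hy).trans (isLittleO_exp_neg_mul_rpow_atTop hc0 r).isBigO

lemma thetaPair_symm (hy : 0 < y) : (thetaPair x y hy).symm = thetaPair x y hy := by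
  unfold thetaPair WeakFEPair.symm
  congr 1
  exact inv_one


lemma norm_symm_finTwo (p : ℤ × ℤ) :
    ‖(finTwoArrowEquiv ℤ).symm p‖ = max |(p.1 : ℝ)| |(p.2 : ℝ)| := by
  rw [EisensteinSeries.norm_eq_max_natAbs]
  simp [finTwoArrowEquiv, Nat.cast_max, Nat.cast_natAbs]

lemma summable_epstein (hy : 0 < y) {σ : ℝ} (hσ : 1 < σ) :
    Summable fun p : ℤ × ℤ => ‖(if p = 0 then 0 else 1 : ℂ)‖ / (π * Qf x y p) ^ σ := by
  set c : ℝ := y / (1 + x ^ 2 + y ^ 2) with hc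
  have hc0 : 0 < c := div_pos hy (by positivity)
  have hmaj : Summable fun p : ℤ × ℤ =>
      (π * c) ^ (-σ) * ‖(finTwoArrowEquiv ℤ).symm p‖ ^ (-(2 * σ)) := by
    refine Summable.mul_left _ ?_
    exact ((finTwoArrowEquiv ℤ).symm.summable_iff).mpr
      (EisensteinSeries.summable_one_div_norm_rpow (by linarith))
  refine hmaj.of_nonneg_of_le (fun p => div_nonneg (norm_nonneg _)
    (Real.rpow_nonneg (mul_nonneg Real.pi_pos.le (Qf_nonneg x y hy p)) _)) (fun p => ?_)
  by_cases hp : p = 0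
  · rw [if_pos hp, norm_zero, zero_div]
    positivity
  · rw [if_neg hp, norm_one]
    set M : ℝ := ‖(finTwoArrowEquiv ℤ).symm p‖ with hM
    have hM1 : 1 ≤ M := by
      rw [hM, norm_symm_finTwo]
      have h : p.1 ≠ 0 ∨ p.2 ≠ 0 := by
        by_contra h; push_neg at h; exact hp (Prod.ext h.1 h.2)
      rcases h with h | h
      · refine le_max_of_le_left ?_
        rw [← Int.cast_abs]; exact_mod_cast Int.one_le_abs h
      · refine le_max_of_le_right ?_
        rw [← Int.cast_abs]; exact_mod_cast Int.one_le_abs h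
    have hM0 : 0 < M := lt_of_lt_of_le one_pos hM1
    have hMsq : M ^ 2 ≤ (p.1 : ℝ) ^ 2 + (p.2 : ℝ) ^ 2 := by
      rw [hM, norm_symm_finTwo]
      rcases max_cases |(p.1 : ℝ)| |(p.2 : ℝ)| with ⟨h1, _⟩ | ⟨h1, _⟩ <;> rw [h1] <;>
        [skip; skip] <;> nlinarith [_root_.sq_abs (p.1 : ℝ), _root_.sq_abs (p.2 : ℝ),
          sq_nonneg (p.1 : ℝ), sq_nonneg (p.2 : ℝ)]
    have hkey : (π * c) * M ^ 2 ≤ π * Qf x y p := by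
      have h1 := Qf_lower x y hy p
      have h3 : c * M ^ 2 ≤ Qf x y p :=
        le_trans (mul_le_mul_of_nonneg_left hMsq hc0.le) h1
      calc (π * c) * M ^ 2 = π * (c * M ^ 2) := by ring
        _ ≤ π * Qf x y p := mul_le_mul_of_nonneg_left h3 Real.pi_pos.le
    have hL : (0:ℝ) < (π * c) * M ^ 2 := by positivity
    have hrpow : ((π * c) * M ^ 2) ^ σ ≤ (π * Qf x y p) ^ σ :=
      Real.rpow_le_rpow hL.le hkey (by linarith)
    have h2 : 1 / (π * Qf x y p) ^ σ ≤ 1 / ((π * c) * M ^ 2) ^ σ :=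
      one_div_le_one_div_of_le (Real.rpow_pos_of_pos hL σ) hrpow
    refine h2.trans (le_of_eq ?_)
    have hexp : ((π * c) * M ^ 2) ^ σ = (π * c) ^ σ * M ^ (2 * σ) := by
      rw [Real.mul_rpow (by positivity) (sq_nonneg M), ← Real.rpow_natCast M 2,
        ← Real.rpow_mul hM0.le]
      norm_num
    rw [one_div, hexp, mul_inv, ← Real.rpow_neg (by positivity), ← Real.rpow_neg hM0.le]

lemma Lambda_eq (hy : 0 < y) {s : ℂ} (hs : 1 < s.re) :
    (thetaPair x y hy).Λ s =
      ∑' p : ℤ × ℤ, Complex.Gamma s * (if p = 0 then 0 else 1) /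
        ((π * Qf x y p : ℝ) : ℂ) ^ s := by
  set c : ℝ := y / (1 + x ^ 2 + y ^ 2) with hc
  have hc0 : 0 < c := div_pos hy (by positivity)
  have hmellin := ((thetaPair x y hy).hasMellin (by exact_mod_cast hs)).2
  have hsum := hasSum_mellin (ι := ℤ × ℤ) (a := fun p => if p = 0 then 0 else 1)
    (p := fun p => π * Qf x y p) (F := fun t => Θ x y t - 1) (s := s)
    (fun p => ?_) (by linarith : 0 < s.re) (fun t ht => ?_) (summable_epstein x y hy hs)
  · rw [← hmellin]
    exact hsum.tsum_eq.symm
  · by_cases hp : p = 0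
    · exact Or.inl (by simp [hp])
    · exact Or.inr (mul_pos Real.pi_pos (lt_of_lt_of_le hc0 (Qf_pos x y hy hp)))
  · rw [mem_Ioi] at ht
    have heq : (fun p : ℤ × ℤ => (if p = 0 then 0 else 1 : ℂ) * rexp (-(π * Qf x y p) * t)) =
        fun p : ℤ × ℤ => (if p = 0 then 0 else (rexp (-π * t * Qf x y p) : ℂ)) := by
      funext p
      by_cases hp : p = 0
      · rw [if_pos hp, if_pos hp, zero_mul]
      · rw [if_neg hp, if_neg hp, one_mul, show -(π * Qf x y p) * t = -π * t * Qf x y p by ring]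
    rw [heq]
    have hsummable : Summable fun p : ℤ × ℤ =>
        (if p = 0 then 0 else (rexp (-π * t * Qf x y p) : ℂ)) := by
      rw [← summable_norm_iff]
      refine (summable_masked x y hy ht).congr fun p => ?_
      by_cases hp : p = 0
      · simp [hp]
      · rw [if_neg hp, if_neg hp, Complex.norm_real, Real.norm_eq_abs, Real.abs_exp]
    have := hsummable.hasSum
    rwa [← theta_sub_one x y hy ht] at this

end EstarAux

end EstarAux

namespace EstarAux

lemma half_Lambda_eq_Estar (x y : ℝ) (hy : 0 < y) {s : ℂ} (hs : 1 < s.re) :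
    (1 / 2 : ℂ) * (thetaPair x y hy).Λ s = Estar s x y := by
  rw [Lambda_eq x y hy hs, Estar]
  have key : ∀ p : ℤ × ℤ, Complex.Gamma s * (if p = 0 then 0 else 1) /
      ((π * Qf x y p : ℝ) : ℂ) ^ s =
      ((Real.pi : ℂ) ^ (-s) * Complex.Gamma s) * (if p = 0 then 0 else
        ((y : ℂ) / ((((p.1 : ℝ) * x + (p.2 : ℝ)) ^ 2 + (p.1 : ℝ) ^ 2 * y ^ 2 : ℝ) : ℂ)) ^ s) := by
    intro p
    by_cases hp : p = 0
    · rw [if_pos hp, if_pos hp, mul_zero, zero_div, mul_zero]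
    · rw [if_neg hp, if_neg hp]
      have hc0 : (0:ℝ) < y / (1 + x ^ 2 + y ^ 2) := div_pos hy (by positivity)
      have hQ : 0 < Qf x y p := lt_of_lt_of_le hc0 (Qf_pos x y hy hp)
      have hQ' : ((((p.1 : ℝ) * x + (p.2 : ℝ)) ^ 2 + (p.1 : ℝ) ^ 2 * y ^ 2 : ℝ)) =
          y * Qf x y p := by
        rw [Qf]; field_simp
      rw [show ((((p.1 : ℝ) * x + (p.2 : ℝ)) ^ 2 + (p.1 : ℝ) ^ 2 * y ^ 2 : ℝ) : ℂ) =
        ((y * Qf x y p : ℝ) : ℂ) from congrArg _ hQ']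
      have h1 : ((y : ℂ) / ((y * Qf x y p : ℝ) : ℂ)) = (((Qf x y p)⁻¹ : ℝ) : ℂ) := by
        rw [← Complex.ofReal_div]
        congr 1
        field_simp
      rw [h1]
      have h2 : (((Qf x y p)⁻¹ : ℝ) : ℂ) ^ s = (((Qf x y p : ℝ) : ℂ) ^ s)⁻¹ := by
        rw [Complex.ofReal_inv, Complex.inv_cpow]
        rw [Complex.arg_ofReal_of_nonneg hQ.le]
        exact Ne.symm Real.pi_ne_zero
      rw [h2]
      have h3 : ((π * Qf x y p : ℝ) : ℂ) ^ s =
          ((π : ℝ) : ℂ) ^ s * ((Qf x y p : ℝ) : ℂ) ^ s := by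
        rw [Complex.ofReal_mul]
        exact mul_cpow_ofReal_nonneg Real.pi_pos.le hQ.le s
      rw [h3, Complex.cpow_neg]
      rw [div_eq_mul_inv, mul_inv]
      ring
  calc (1 / 2 : ℂ) * ∑' p : ℤ × ℤ, Complex.Gamma s * (if p = 0 then 0 else 1) /
        ((π * Qf x y p : ℝ) : ℂ) ^ s
      = (1 / 2 : ℂ) * ∑' p : ℤ × ℤ, ((Real.pi : ℂ) ^ (-s) * Complex.Gamma s) *
          (if p = 0 then 0 else
            ((y : ℂ) / ((((p.1 : ℝ) * x + (p.2 : ℝ)) ^ 2 + (p.1 : ℝ) ^ 2 * y ^ 2 : ℝ) : ℂ)) ^ s) := by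
        rw [tsum_congr key]
    _ = 1 / 2 * (Real.pi : ℂ) ^ (-s) * Complex.Gamma s *
        ∑' p : ℤ × ℤ, (if p = 0 then 0 else
          ((y : ℂ) / ((((p.1 : ℝ) * x + (p.2 : ℝ)) ^ 2 + (p.1 : ℝ) ^ 2 * y ^ 2 : ℝ) : ℂ)) ^ s) := by
        rw [tsum_mul_left]
        ring

end EstarAux

/-- Functional equation: the meromorphic continuation `F` of `s ↦ E*_s(z)` (analytic away
from `s = 0, 1`) satisfies `F(s) = F(1−s)` everywhere. -/
theorem Estar_functional_equation (x y : ℝ) (hy : 0 < y) :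
    ∃ F : ℂ → ℂ,
      (∀ s : ℂ, 1 < s.re → F s = Estar s x y) ∧
      (∀ s : ℂ, s ≠ 0 → s ≠ 1 → AnalyticAt ℂ F s) ∧
      (∀ s : ℂ, F s = F (1 - s)) := by
  refine ⟨fun s => (1 / 2 : ℂ) * (EstarAux.thetaPair x y hy).Λ s,
    fun s hs => (EstarAux.half_Lambda_eq_Estar x y hy hs :), fun s hs0 hs1 => ?_, fun s => ?_⟩
  · have hU : IsOpen ({0, 1}ᶜ : Set ℂ) := (Set.toFinite ({0, 1} : Set ℂ)).isClosed.isOpen_compl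
    have hd : DifferentiableOn ℂ (fun s => (1 / 2 : ℂ) * (EstarAux.thetaPair x y hy).Λ s)
        ({0, 1}ᶜ : Set ℂ) := by
      intro z hz
      simp only [Set.mem_compl_iff, Set.mem_insert_iff, Set.mem_singleton_iff, not_or] at hz
      exact ((differentiableAt_const _).mul
        ((EstarAux.thetaPair x y hy).differentiableAt_Λ (Or.inl hz.1)
          (Or.inl (by simpa [EstarAux.thetaPair] using hz.2)))).differentiableWithinAt
    exact hd.analyticAt (hU.mem_nhds (by simp [hs0, hs1]))
  · have h := (EstarAux.thetaPair x y hy).functional_equation s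
    rw [EstarAux.thetaPair_symm] at h
    have hk : (((EstarAux.thetaPair x y hy).k : ℝ) : ℂ) = 1 := by
      norm_num [EstarAux.thetaPair]
    have hε : (EstarAux.thetaPair x y hy).ε = 1 := rfl
    rw [hk, hε, one_smul] at h
    show (1 / 2 : ℂ) * (EstarAux.thetaPair x y hy).Λ s =
      (1 / 2 : ℂ) * (EstarAux.thetaPair x y hy).Λ (1 - s)
    rw [h]
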